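/- Let F : ℝ^m → ℝ be a C² objective function, let c > 0 and let R be an m×m real matrix with R·Rᵀ = Id; set A = cR and G(z) = F(Az). Let (z_n) be the sequence constructed by BNQN with parameters δ₀,…,δ_m, θ, τ, γ₀ applied to F starting from an initial point z₀ ∈ ℝ^m, and let (z_n') be the sequence constructed by BNQN with parameters δ₀',…,δ_m', θ', τ, γ₀ applied to G starting from z₀' = A⁻¹z₀, where δ_i' = δ_i·c^{2−τ} for all 0 ≤ i ≤ m and θ' = cθ. Then z_n' = A⁻¹z_n for all n. -/

import Mathlib

open scoped Classical RealInnerProductSpace Pointwise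

noncomputable section

/-- `minsp A` : the minimum of the absolute values of the eigenvalues of a symmetric
operator `A`, realized as `min_{‖e‖ = 1} ‖A e‖`. -/
def minsp {m : ℕ} (A : EuclideanSpace ℝ (Fin m) →L[ℝ] EuclideanSpace ℝ (Fin m)) : ℝ :=
  sInf {r | ∃ e : EuclideanSpace ℝ (Fin m), ‖e‖ = 1 ∧ r = ‖A e‖}

/-- The span of the eigenvectors of `A` with positive eigenvalues. -/
def posSpace {m : ℕ} (A : EuclideanSpace ℝ (Fin m) →L[ℝ] EuclideanSpace ℝ (Fin m)) :
    Submodule ℝ (EuclideanSpace ℝ (Fin m)) :=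
  ⨆ (μ : ℝ) (_ : 0 < μ), Module.End.eigenspace (A : EuclideanSpace ℝ (Fin m) →ₗ[ℝ] EuclideanSpace ℝ (Fin m)) μ

/-- The span of the eigenvectors of `A` with negative eigenvalues. -/
def negSpace {m : ℕ} (A : EuclideanSpace ℝ (Fin m) →L[ℝ] EuclideanSpace ℝ (Fin m)) :
    Submodule ℝ (EuclideanSpace ℝ (Fin m)) :=
  ⨆ (μ : ℝ) (_ : μ < 0), Module.End.eigenspace (A : EuclideanSpace ℝ (Fin m) →ₗ[ℝ] EuclideanSpace ℝ (Fin m)) μ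

/-- One step of the Backtracking New Q-Newton's method (New Variant), with parameters
`δ 0, …, δ m`, `θ`, `τ`, `γ₀`, applied to `F` at the point `z`. -/
def bnqnStep {m : ℕ} (F : EuclideanSpace ℝ (Fin m) → ℝ) (δ : Fin (m + 1) → ℝ)
    (θ τ γ₀ : ℝ) (z : EuclideanSpace ℝ (Fin m)) : EuclideanSpace ℝ (Fin m) :=
  let g := gradient F z
  if g = 0 then z
  else
    -- κ = (1/2) min_{i ≠ j} |δ i - δ j|
    let κ : ℝ := (1 / 2) * sInf {t | ∃ i j : Fin (m + 1), i ≠ j ∧ t = |δ i - δ j|}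
    -- candidate matrices A_j = ∇²F(z) + δ_j ‖∇F(z)‖^τ Id
    let B : Fin (m + 1) → (EuclideanSpace ℝ (Fin m) →L[ℝ] EuclideanSpace ℝ (Fin m)) := fun j =>
      fderiv ℝ (gradient F) z + (δ j * ‖g‖ ^ τ) • ContinuousLinearMap.id ℝ (EuclideanSpace ℝ (Fin m))
    -- the least index j with minsp (A_j) ≥ κ ‖∇F(z)‖^τ
    if hj : ∃ j : ℕ, ∃ hjm : j < m + 1, κ * ‖g‖ ^ τ ≤ minsp (B ⟨j, hjm⟩) then
      let A := B ⟨Nat.find hj, (Nat.find_spec hj).choose⟩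
      let v := A.inverse g
      let w := ((Submodule.orthogonalProjection (posSpace A) v : EuclideanSpace ℝ (Fin m))
        - (Submodule.orthogonalProjection (negSpace A) v : EuclideanSpace ℝ (Fin m)))
      let wh := (max 1 (θ * ‖w‖))⁻¹ • w
      -- Armijo's backtracking line search: γ = γ₀ / 3^h for the least such h
      if hb : ∃ h : ℕ, F (z - (γ₀ / 3 ^ h) • wh) - F z ≤ -((γ₀ / 3 ^ h) * ⟪wh, g⟫) / 3 then
        z - (γ₀ / 3 ^ Nat.find hb) • wh
      else z
    else z

/-- The sequence constructed by the Backtracking New Q-Newton's method (New Variant)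
with parameters `δ 0, …, δ m`, `θ`, `τ`, `γ₀`, applied to `F` with initial point `z₀`. -/
def bnqnSeq {m : ℕ} (F : EuclideanSpace ℝ (Fin m) → ℝ) (δ : Fin (m + 1) → ℝ)
    (θ τ γ₀ : ℝ) (z₀ : EuclideanSpace ℝ (Fin m)) : ℕ → EuclideanSpace ℝ (Fin m)
  | 0 => z₀
  | n + 1 => bnqnStep F δ θ τ γ₀ (bnqnSeq F δ θ τ γ₀ z₀ n)

namespace BnqnAux
variable {m : ℕ} {R : EuclideanSpace ℝ (Fin m) →L[ℝ] EuclideanSpace ℝ (Fin m)}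
variable {m : ℕ} {R : EuclideanSpace ℝ (Fin m) →L[ℝ] EuclideanSpace ℝ (Fin m)}

theorem hRRt (hR : R.comp (ContinuousLinearMap.adjoint R) =
    ContinuousLinearMap.id ℝ (EuclideanSpace ℝ (Fin m))) :
    ∀ x, R (ContinuousLinearMap.adjoint R x) = x := fun x => by
  have := ContinuousLinearMap.ext_iff.mp hR x
  simpa using this

theorem hRtR (hR : R.comp (ContinuousLinearMap.adjoint R) =
    ContinuousLinearMap.id ℝ (EuclideanSpace ℝ (Fin m))) :
    ∀ x, ContinuousLinearMap.adjoint R (R x) = x := by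
  have hsurj : Function.Surjective R := fun x => ⟨ContinuousLinearMap.adjoint R x, hRRt hR x⟩
  have hinj : Function.Injective R :=
    (LinearMap.injective_iff_surjective
      (f := (R : EuclideanSpace ℝ (Fin m) →ₗ[ℝ] EuclideanSpace ℝ (Fin m)))).mpr hsurj
  intro x
  exact hinj (by rw [hRRt hR])

theorem hinnerRt (hR : R.comp (ContinuousLinearMap.adjoint R) =
    ContinuousLinearMap.id ℝ (EuclideanSpace ℝ (Fin m))) :
    ∀ x y : EuclideanSpace ℝ (Fin m),
      ⟪ContinuousLinearMap.adjoint R x, ContinuousLinearMap.adjoint R y⟫ = ⟪x, y⟫ := fun x y => by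
  rw [ContinuousLinearMap.adjoint_inner_left, hRRt hR]

theorem hnormRt (hR : R.comp (ContinuousLinearMap.adjoint R) =
    ContinuousLinearMap.id ℝ (EuclideanSpace ℝ (Fin m))) :
    ∀ x : EuclideanSpace ℝ (Fin m), ‖ContinuousLinearMap.adjoint R x‖ = ‖x‖ := fun x => by
  have h := hinnerRt hR x x
  rw [real_inner_self_eq_norm_mul_norm, real_inner_self_eq_norm_mul_norm] at h
  nlinarith [norm_nonneg (ContinuousLinearMap.adjoint R x), norm_nonneg x]

theorem hnormR (hR : R.comp (ContinuousLinearMap.adjoint R) =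
    ContinuousLinearMap.id ℝ (EuclideanSpace ℝ (Fin m))) :
    ∀ x : EuclideanSpace ℝ (Fin m), ‖R x‖ = ‖x‖ := fun x => by
  rw [← hnormRt hR (R x), hRtR hR]

/-- `Rᵀ` as a linear isometry equivalence. -/
def isoRt (hR : R.comp (ContinuousLinearMap.adjoint R) =
    ContinuousLinearMap.id ℝ (EuclideanSpace ℝ (Fin m))) :
    EuclideanSpace ℝ (Fin m) ≃ₗᵢ[ℝ] EuclideanSpace ℝ (Fin m) :=
  ⟨LinearEquiv.ofLinear ((ContinuousLinearMap.adjoint R : _ →L[ℝ] _) :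
      EuclideanSpace ℝ (Fin m) →ₗ[ℝ] EuclideanSpace ℝ (Fin m))
    (R : EuclideanSpace ℝ (Fin m) →ₗ[ℝ] EuclideanSpace ℝ (Fin m))
    (LinearMap.ext (hRtR hR)) (LinearMap.ext (hRRt hR)), hnormRt hR⟩

@[simp] theorem isoRt_apply (hR : R.comp (ContinuousLinearMap.adjoint R) =
    ContinuousLinearMap.id ℝ (EuclideanSpace ℝ (Fin m))) (x : EuclideanSpace ℝ (Fin m)) :
    isoRt hR x = ContinuousLinearMap.adjoint R x := rfl

@[simp] theorem isoRt_symm_apply (hR : R.comp (ContinuousLinearMap.adjoint R) =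
    ContinuousLinearMap.id ℝ (EuclideanSpace ℝ (Fin m))) (x : EuclideanSpace ℝ (Fin m)) :
    (isoRt hR).symm x = R x := rfl

theorem proj_map (hR : R.comp (ContinuousLinearMap.adjoint R) =
    ContinuousLinearMap.id ℝ (EuclideanSpace ℝ (Fin m)))
    (S : Submodule ℝ (EuclideanSpace ℝ (Fin m))) (x : EuclideanSpace ℝ (Fin m)) :
    (Submodule.orthogonalProjection (S.map ((ContinuousLinearMap.adjoint R : _ →L[ℝ] _) :
        EuclideanSpace ℝ (Fin m) →ₗ[ℝ] EuclideanSpace ℝ (Fin m)))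
      (ContinuousLinearMap.adjoint R x) : EuclideanSpace ℝ (Fin m)) =
      ContinuousLinearMap.adjoint R (Submodule.orthogonalProjection S x) := by
  have h := Submodule.starProjection_map_apply (𝕜 := ℝ) (isoRt hR) S (ContinuousLinearMap.adjoint R x)
  simp only [isoRt_symm_apply, isoRt_apply, hRRt hR] at h
  exact h

theorem eigenspace_conj (hR : R.comp (ContinuousLinearMap.adjoint R) =
    ContinuousLinearMap.id ℝ (EuclideanSpace ℝ (Fin m)))
    (X : EuclideanSpace ℝ (Fin m) →L[ℝ] EuclideanSpace ℝ (Fin m)) {a : ℝ} (ha : 0 < a) (μ : ℝ) :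
    Module.End.eigenspace
        (((a • ((ContinuousLinearMap.adjoint R).comp (X.comp R))) :
          EuclideanSpace ℝ (Fin m) →L[ℝ] EuclideanSpace ℝ (Fin m)) :
          EuclideanSpace ℝ (Fin m) →ₗ[ℝ] EuclideanSpace ℝ (Fin m)) μ
      = (Module.End.eigenspace ((X : EuclideanSpace ℝ (Fin m) →ₗ[ℝ] EuclideanSpace ℝ (Fin m))) (μ / a)).map
          ((ContinuousLinearMap.adjoint R : _ →L[ℝ] _) :
            EuclideanSpace ℝ (Fin m) →ₗ[ℝ] EuclideanSpace ℝ (Fin m)) := by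
  ext x
  simp only [Submodule.mem_map, Module.End.mem_eigenspace_iff, ContinuousLinearMap.coe_coe,
    ContinuousLinearMap.coe_smul', Pi.smul_apply, ContinuousLinearMap.coe_comp',
    Function.comp_apply]
  constructor
  · intro hx
    refine ⟨R x, ?_, hRtR hR x⟩
    have h2 := congrArg (fun y => R y) hx
    simp only [map_smul, hRRt hR] at h2
    have h3 := congrArg (fun y => a⁻¹ • y) h2
    simp only [smul_smul, inv_mul_cancel₀ ha.ne', one_smul] at h3
    rw [h3, div_eq_inv_mul]
  · rintro ⟨y, hy, rfl⟩
    rw [hRRt hR, hy, map_smul, smul_smul]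
    congr 1
    field_simp
theorem sup_eig_conj (hR : R.comp (ContinuousLinearMap.adjoint R) =
    ContinuousLinearMap.id ℝ (EuclideanSpace ℝ (Fin m)))
    (X : EuclideanSpace ℝ (Fin m) →L[ℝ] EuclideanSpace ℝ (Fin m)) {a : ℝ} (ha : 0 < a)
    (p : ℝ → Prop) (hp : ∀ b, p b ↔ p (b / a)) :
    (⨆ (μ : ℝ) (_ : p μ), Module.End.eigenspace
        (((a • ((ContinuousLinearMap.adjoint R).comp (X.comp R))) :
          EuclideanSpace ℝ (Fin m) →L[ℝ] EuclideanSpace ℝ (Fin m)) :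
          EuclideanSpace ℝ (Fin m) →ₗ[ℝ] EuclideanSpace ℝ (Fin m)) μ)
      = (⨆ (μ : ℝ) (_ : p μ), Module.End.eigenspace
          ((X : EuclideanSpace ℝ (Fin m) →ₗ[ℝ] EuclideanSpace ℝ (Fin m))) μ).map
          ((ContinuousLinearMap.adjoint R : _ →L[ℝ] _) :
            EuclideanSpace ℝ (Fin m) →ₗ[ℝ] EuclideanSpace ℝ (Fin m)) := by
  apply le_antisymm
  · refine iSup₂_le fun μ hμ => ?_
    rw [eigenspace_conj hR X ha μ]
    exact Submodule.map_mono (le_iSup₂ (f := fun ν (_ : p ν) => Module.End.eigenspace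
      ((X : EuclideanSpace ℝ (Fin m) →ₗ[ℝ] EuclideanSpace ℝ (Fin m))) ν) (μ / a) ((hp μ).mp hμ))
  · rw [Submodule.map_iSup]
    refine iSup_le fun ν => ?_
    rw [Submodule.map_iSup]
    refine iSup_le fun hν => ?_
    have h1 : p (a * ν) := by
      have := (hp (a * ν)).mpr
      rw [mul_div_cancel_left₀ _ ha.ne'] at this
      exact this hν
    have h2 : Module.End.eigenspace
        ((X : EuclideanSpace ℝ (Fin m) →ₗ[ℝ] EuclideanSpace ℝ (Fin m))) ν =
        Module.End.eigenspace
        ((X : EuclideanSpace ℝ (Fin m) →ₗ[ℝ] EuclideanSpace ℝ (Fin m))) ((a * ν) / a) := by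
      rw [mul_div_cancel_left₀ _ ha.ne']
    rw [h2, ← eigenspace_conj hR X ha (a * ν)]
    exact le_iSup₂ (f := fun ν (_ : p ν) => Module.End.eigenspace
      (((a • ((ContinuousLinearMap.adjoint R).comp (X.comp R))) :
        EuclideanSpace ℝ (Fin m) →L[ℝ] EuclideanSpace ℝ (Fin m)) :
        EuclideanSpace ℝ (Fin m) →ₗ[ℝ] EuclideanSpace ℝ (Fin m)) ν) (a * ν) h1
theorem minsp_conj (hR : R.comp (ContinuousLinearMap.adjoint R) =
    ContinuousLinearMap.id ℝ (EuclideanSpace ℝ (Fin m)))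
    (X : EuclideanSpace ℝ (Fin m) →L[ℝ] EuclideanSpace ℝ (Fin m)) {a : ℝ} (ha : 0 < a) :
    minsp (a • ((ContinuousLinearMap.adjoint R).comp (X.comp R))) = a * minsp X := by
  have hset : {r | ∃ e : EuclideanSpace ℝ (Fin m), ‖e‖ = 1 ∧
        r = ‖(a • ((ContinuousLinearMap.adjoint R).comp (X.comp R))) e‖}
      = a • ({r | ∃ e : EuclideanSpace ℝ (Fin m), ‖e‖ = 1 ∧ r = ‖X e‖} : Set ℝ) := by
    ext r
    simp only [Set.mem_setOf_eq, Set.mem_smul_set, smul_eq_mul]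
    constructor
    · rintro ⟨u, hu, rfl⟩
      refine ⟨‖X (R u)‖, ⟨R u, by rw [hnormR hR, hu], rfl⟩, ?_⟩
      simp [norm_smul, abs_of_pos ha, hnormRt hR]
    · rintro ⟨r, ⟨u, hu, rfl⟩, rfl⟩
      refine ⟨ContinuousLinearMap.adjoint R u, by rw [hnormRt hR, hu], ?_⟩
      simp [norm_smul, abs_of_pos ha, hnormRt hR, hRRt hR]
  rw [minsp, minsp, hset, Real.sInf_smul_of_nonneg ha.le, smul_eq_mul]
theorem inverse_conj (hR : R.comp (ContinuousLinearMap.adjoint R) =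
    ContinuousLinearMap.id ℝ (EuclideanSpace ℝ (Fin m)))
    (X : EuclideanSpace ℝ (Fin m) →L[ℝ] EuclideanSpace ℝ (Fin m)) {a : ℝ} (ha : a ≠ 0) :
    (a • ((ContinuousLinearMap.adjoint R).comp (X.comp R))).inverse
      = a⁻¹ • ((ContinuousLinearMap.adjoint R).comp (X.inverse.comp R)) := by
  have huR : ∀ x, (R.comp (ContinuousLinearMap.adjoint R)) x = x := fun x => by
    simp [hRRt hR, hRRt]
  set uR : (EuclideanSpace ℝ (Fin m) →L[ℝ] EuclideanSpace ℝ (Fin m))ˣ :=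
    { val := R, inv := ContinuousLinearMap.adjoint R,
      val_inv := by ext x i; rw [ContinuousLinearMap.mul_apply, hRRt hR x]; rfl,
      inv_val := by ext x i; rw [ContinuousLinearMap.mul_apply, hRtR hR x]; rfl } with huRdef
  set us : (EuclideanSpace ℝ (Fin m) →L[ℝ] EuclideanSpace ℝ (Fin m))ˣ :=
    { val := a • 1, inv := a⁻¹ • 1,
      val_inv := by ext x i; simp [smul_smul, mul_inv_cancel₀ ha, inv_mul_cancel₀ ha, ← mul_assoc],
      inv_val := by ext x i; simp [smul_smul, inv_mul_cancel₀ ha, mul_inv_cancel₀ ha, ← mul_assoc] } with husdef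
  have key : a • ((ContinuousLinearMap.adjoint R).comp (X.comp R))
      = ↑(us * uR⁻¹) * X * ↑uR := by
    ext x
    rfl
  by_cases hX : IsUnit X
  · obtain ⟨u, rfl⟩ := hX
    rw [key, ← ContinuousLinearMap.ringInverse_eq_inverse]
    have : ↑(us * uR⁻¹) * ↑u * ↑uR = ((us * uR⁻¹ * u * uR : _ˣ) :
        EuclideanSpace ℝ (Fin m) →L[ℝ] EuclideanSpace ℝ (Fin m)) := by
      simp [Units.val_mul]
    rw [this, Ring.inverse_unit, Ring.inverse_unit]
    have hval : (us * uR⁻¹ * u * uR)⁻¹ = uR⁻¹ * u⁻¹ * uR * us⁻¹ := by group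
    rw [hval]
    refine ContinuousLinearMap.ext fun x => ?_
    show (ContinuousLinearMap.adjoint R)
        (((u⁻¹ : (EuclideanSpace ℝ (Fin m) →L[ℝ] EuclideanSpace ℝ (Fin m))ˣ) :
          EuclideanSpace ℝ (Fin m) →L[ℝ] EuclideanSpace ℝ (Fin m)) (R (a⁻¹ • x)))
      = (a⁻¹ • ((ContinuousLinearMap.adjoint R).comp
          (((u⁻¹ : (EuclideanSpace ℝ (Fin m) →L[ℝ] EuclideanSpace ℝ (Fin m))ˣ) :
          EuclideanSpace ℝ (Fin m) →L[ℝ] EuclideanSpace ℝ (Fin m)).comp R))) x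
    simp [map_smul]
  · have hX2 : ¬ IsUnit (a • ((ContinuousLinearMap.adjoint R).comp (X.comp R))) := by
      intro h
      rw [key] at h
      exact hX ((Units.isUnit_units_mul (us * uR⁻¹) X).mp ((Units.isUnit_mul_units _ uR).mp h))
    rw [← ContinuousLinearMap.ringInverse_eq_inverse,
      Ring.inverse_non_unit _ hX2, Ring.inverse_non_unit _ hX]
    simp
theorem grad_comp (F : EuclideanSpace ℝ (Fin m) → ℝ) (hF : Differentiable ℝ F)
    (L : EuclideanSpace ℝ (Fin m) →L[ℝ] EuclideanSpace ℝ (Fin m))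
    (y : EuclideanSpace ℝ (Fin m)) :
    gradient (fun w => F (L w)) y = ContinuousLinearMap.adjoint L (gradient F (L y)) := by
  have h1 : HasGradientAt F (gradient F (L y)) (L y) := (hF (L y)).hasGradientAt
  have h2 := h1.hasFDerivAt.comp y L.hasFDerivAt
  have h3 : (InnerProductSpace.toDual ℝ (EuclideanSpace ℝ (Fin m)))
        (ContinuousLinearMap.adjoint L (gradient F (L y)))
      = ((InnerProductSpace.toDual ℝ (EuclideanSpace ℝ (Fin m))) (gradient F (L y))).comp L := by
    ext v
    simp [InnerProductSpace.toDual_apply_apply, ContinuousLinearMap.adjoint_inner_left]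
  have h4 : HasGradientAt (fun w => F (L w))
      (ContinuousLinearMap.adjoint L (gradient F (L y))) y := by
    rw [hasGradientAt_iff_hasFDerivAt, h3]
    exact h2
  exact h4.gradient
theorem gradient_contDiff (F : EuclideanSpace ℝ (Fin m) → ℝ) (hF : ContDiff ℝ 2 F) :
    ContDiff ℝ 1 (gradient F) := by
  have h1 : ContDiff ℝ 1 (fderiv ℝ F) := hF.fderiv_right (le_refl 2)
  let N : (EuclideanSpace ℝ (Fin m) →L[ℝ] ℝ) →L[ℝ] EuclideanSpace ℝ (Fin m) :=
    { toFun := fun ℓ => (InnerProductSpace.toDual ℝ (EuclideanSpace ℝ (Fin m))).symm ℓ,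
      map_add' := fun f g => map_add _ f g,
      map_smul' := fun r f => by
        have := (InnerProductSpace.toDual ℝ (EuclideanSpace ℝ (Fin m))).symm.map_smulₛₗ r f
        simpa using this,
      cont := (InnerProductSpace.toDual ℝ (EuclideanSpace ℝ (Fin m))).symm.continuous }
  have h2 : ContDiff ℝ 1 (fun x => N (fderiv ℝ F x)) := N.contDiff.comp h1
  exact h2
theorem hessian_comp (F : EuclideanSpace ℝ (Fin m) → ℝ) (hF : ContDiff ℝ 2 F)
    (L : EuclideanSpace ℝ (Fin m) →L[ℝ] EuclideanSpace ℝ (Fin m))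
    (y : EuclideanSpace ℝ (Fin m)) :
    fderiv ℝ (gradient (fun w => F (L w))) y
      = (ContinuousLinearMap.adjoint L).comp ((fderiv ℝ (gradient F) (L y)).comp L) := by
  have hgrad_eq : gradient (fun w => F (L w))
      = fun w => (ContinuousLinearMap.adjoint L) (gradient F (L w)) :=
    funext fun w => grad_comp F (hF.differentiable (by norm_num)) L w
  rw [hgrad_eq]
  have hdiff : DifferentiableAt ℝ (gradient F) (L y) :=
    ((gradient_contDiff F hF).differentiable one_ne_zero) _
  have h1 : HasFDerivAt (fun w => (ContinuousLinearMap.adjoint L) (gradient F (L w)))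
      ((ContinuousLinearMap.adjoint L).comp ((fderiv ℝ (gradient F) (L y)).comp L)) y :=
    (ContinuousLinearMap.adjoint L).hasFDerivAt.comp y
      (hdiff.hasFDerivAt.comp y L.hasFDerivAt)
  exact h1.fderiv



set_option maxHeartbeats 2000000 in
theorem bnqnStep_conj {m : ℕ} (F : EuclideanSpace ℝ (Fin m) → ℝ) (hF : ContDiff ℝ 2 F)
    {c : ℝ} (hc : 0 < c)
    {R : EuclideanSpace ℝ (Fin m) →L[ℝ] EuclideanSpace ℝ (Fin m)}
    (hR : R.comp (ContinuousLinearMap.adjoint R) =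
      ContinuousLinearMap.id ℝ (EuclideanSpace ℝ (Fin m)))
    (δ δ' : Fin (m + 1) → ℝ) (θ θ' τ γ₀ : ℝ) (hτ : 0 < τ)
    (hδ' : ∀ i, δ' i = δ i * c ^ ((2 : ℝ) - τ)) (hθ' : θ' = c * θ)
    (z : EuclideanSpace ℝ (Fin m)) :
    bnqnStep (fun w => F (c • R w)) δ' θ' τ γ₀ (c⁻¹ • (ContinuousLinearMap.adjoint R) z)
      = c⁻¹ • (ContinuousLinearMap.adjoint R) (bnqnStep F δ θ τ γ₀ z) := by
  have hFdiff : Differentiable ℝ F := hF.differentiable (by norm_num)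
  have hrr : ∀ x, R (ContinuousLinearMap.adjoint R x) = x := hRRt hR
  have hrtr : ∀ x, ContinuousLinearMap.adjoint R (R x) = x := hRtR hR
  have hLT : ∀ u, c • R (c⁻¹ • ContinuousLinearMap.adjoint R u) = u := by
    intro u
    rw [map_smul, smul_smul, mul_inv_cancel₀ hc.ne', one_smul, hrr]
  have hadj : ContinuousLinearMap.adjoint (c • R) = c • ContinuousLinearMap.adjoint R := by
    refine ((ContinuousLinearMap.eq_adjoint_iff _ _).mpr fun x y => ?_).symm
    show ⟪c • ContinuousLinearMap.adjoint R x, y⟫ = ⟪x, c • R y⟫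
    rw [real_inner_smul_left, ContinuousLinearMap.adjoint_inner_left, real_inner_smul_right]
  unfold bnqnStep
  lift_lets
  intro gG κG BG gF κF BF
  have hg2val : gG = c • ContinuousLinearMap.adjoint R gF := by
    show gradient (fun w => F (c • R w)) (c⁻¹ • ContinuousLinearMap.adjoint R z)
      = c • ContinuousLinearMap.adjoint R (gradient F z)
    have h1 := grad_comp F hFdiff (c • R) (c⁻¹ • ContinuousLinearMap.adjoint R z)
    have h2 : (c • R : EuclideanSpace ℝ (Fin m) →L[ℝ] EuclideanSpace ℝ (Fin m))
        (c⁻¹ • ContinuousLinearMap.adjoint R z) = z := hLT z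
    rw [h2, hadj] at h1
    exact h1
  have hnormg2 : ‖gG‖ = c * ‖gF‖ := by
    rw [hg2val, norm_smul, hnormRt hR, Real.norm_eq_abs, abs_of_pos hc]
  by_cases hg : gF = 0
  · have hg2 : gG = 0 := by rw [hg2val, hg, map_zero, smul_zero]
    rw [if_pos hg, if_pos hg2]
  · have hg2 : gG ≠ 0 := by
      intro h0
      apply hg
      have hn : c * ‖gF‖ = 0 := by rw [← hnormg2, h0, norm_zero]
      have : ‖gF‖ = 0 := by
        rcases mul_eq_zero.mp hn with h | h
        · exact absurd h hc.ne'
        · exact h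
      exact norm_eq_zero.mp this
    rw [if_neg hg2, if_neg hg]
    have hcτ : (0:ℝ) < c ^ τ := Real.rpow_pos_of_pos hc τ
    have hc2 : (0:ℝ) < c ^ 2 := by positivity
    have hc2τ : (0:ℝ) < c ^ ((2:ℝ) - τ) := Real.rpow_pos_of_pos hc _
    have hrpowg2 : ‖gG‖ ^ τ = c ^ τ * ‖gF‖ ^ τ := by
      rw [hnormg2, Real.mul_rpow hc.le (norm_nonneg _)]
    have hmulc : c ^ ((2:ℝ) - τ) * c ^ τ = c ^ 2 := by
      rw [← Real.rpow_natCast c 2, ← Real.rpow_add hc]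
      norm_num
    have hκ2 : κG = c ^ ((2:ℝ) - τ) * κF := by
      show (1:ℝ)/2 * sInf {t : ℝ | ∃ i j : Fin (m+1), i ≠ j ∧ t = |δ' i - δ' j|}
        = c ^ ((2:ℝ) - τ) * ((1:ℝ)/2 * sInf {t : ℝ | ∃ i j : Fin (m+1), i ≠ j ∧ t = |δ i - δ j|})
      have hsetq : {t : ℝ | ∃ i j : Fin (m+1), i ≠ j ∧ t = |δ' i - δ' j|}
          = c ^ ((2:ℝ) - τ) • ({t : ℝ | ∃ i j : Fin (m+1), i ≠ j ∧ t = |δ i - δ j|} : Set ℝ) := by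
        ext t
        simp only [Set.mem_setOf_eq, Set.mem_smul_set, smul_eq_mul]
        constructor
        · rintro ⟨i, j, hij, rfl⟩
          exact ⟨|δ i - δ j|, ⟨i, j, hij, rfl⟩,
            by rw [hδ', hδ', ← sub_mul, abs_mul, abs_of_pos hc2τ]; ring⟩
        · rintro ⟨t, ⟨i, j, hij, rfl⟩, rfl⟩
          exact ⟨i, j, hij, by rw [hδ', hδ', ← sub_mul, abs_mul, abs_of_pos hc2τ]; ring⟩
      rw [hsetq, Real.sInf_smul_of_nonneg hc2τ.le, smul_eq_mul]
      ring
    have hκg : κG * ‖gG‖ ^ τ = c ^ 2 * (κF * ‖gF‖ ^ τ) := by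
      rw [hκ2, hrpowg2, ← hmulc]; ring
    have hscal : ∀ j : Fin (m+1), δ' j * ‖gG‖ ^ τ = c ^ 2 * (δ j * ‖gF‖ ^ τ) := by
      intro j; rw [hδ', hrpowg2, ← hmulc]; ring
    have hHess : fderiv ℝ (gradient fun w => F (c • R w)) (c⁻¹ • ContinuousLinearMap.adjoint R z)
        = ((c • ContinuousLinearMap.adjoint R) :
            EuclideanSpace ℝ (Fin m) →L[ℝ] EuclideanSpace ℝ (Fin m)).comp
          ((fderiv ℝ (gradient F) z).comp (c • R)) := by
      have h1 := hessian_comp F hF (c • R) (c⁻¹ • ContinuousLinearMap.adjoint R z)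
      have h2 : (c • R : EuclideanSpace ℝ (Fin m) →L[ℝ] EuclideanSpace ℝ (Fin m))
          (c⁻¹ • ContinuousLinearMap.adjoint R z) = z := hLT z
      rw [h2, hadj] at h1
      exact h1
    have hBeq : ∀ j : Fin (m+1), BG j
        = (c^2) • ((ContinuousLinearMap.adjoint R).comp ((BF j).comp R)) := by
      intro j
      show fderiv ℝ (gradient fun w => F (c • R w)) (c⁻¹ • ContinuousLinearMap.adjoint R z)
          + (δ' j * ‖gG‖ ^ τ) • ContinuousLinearMap.id ℝ (EuclideanSpace ℝ (Fin m))
        = (c^2) • ((ContinuousLinearMap.adjoint R).comp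
            ((fderiv ℝ (gradient F) z
              + (δ j * ‖gF‖ ^ τ) • ContinuousLinearMap.id ℝ (EuclideanSpace ℝ (Fin m))).comp R))
      rw [hHess]
      refine ContinuousLinearMap.ext fun x => ?_
      simp only [ContinuousLinearMap.add_apply, ContinuousLinearMap.coe_comp',
        Function.comp_apply, ContinuousLinearMap.coe_smul', Pi.smul_apply,
        ContinuousLinearMap.coe_id', id_eq, map_add, map_smul, hrtr, smul_add, smul_smul,
        hscal j]
      rw [show c * c = c ^ 2 from (sq c).symm]
    have hminspB : ∀ j : Fin (m+1), minsp (BG j) = c^2 * minsp (BF j) := fun j => by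
      rw [hBeq j]; exact minsp_conj hR (BF j) hc2
    have hcond : ∀ (j : ℕ) (hjm : j < m + 1),
        (κG * ‖gG‖ ^ τ ≤ minsp (BG ⟨j, hjm⟩)) ↔ (κF * ‖gF‖ ^ τ ≤ minsp (BF ⟨j, hjm⟩)) := by
      intro j hjm
      rw [hminspB, hκg]
      exact mul_le_mul_iff_of_pos_left hc2
    by_cases hj : ∃ j : ℕ, ∃ hjm : j < m + 1, κF * ‖gF‖ ^ τ ≤ minsp (BF ⟨j, hjm⟩)
    · have hj2 : ∃ j : ℕ, ∃ hjm : j < m + 1, κG * ‖gG‖ ^ τ ≤ minsp (BG ⟨j, hjm⟩) := by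
        obtain ⟨j, hjm, h⟩ := hj
        exact ⟨j, hjm, (hcond j hjm).mpr h⟩
      rw [dif_pos hj2, dif_pos hj]
      lift_lets
      intro AG vG wG whG AF vF wF whF
      have hfind : Nat.find hj2 = Nat.find hj := by
        apply le_antisymm
        · obtain ⟨hjm, h⟩ := Nat.find_spec hj
          exact Nat.find_le ⟨hjm, (hcond _ hjm).mpr h⟩
        · obtain ⟨hjm, h⟩ := Nat.find_spec hj2
          exact Nat.find_le ⟨hjm, (hcond _ hjm).mp h⟩
      have hAG : AG = (c^2) • ((ContinuousLinearMap.adjoint R).comp (AF.comp R)) := by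
        show BG ⟨Nat.find hj2, (Nat.find_spec hj2).choose⟩ = _
        have hfin : (⟨Nat.find hj2, (Nat.find_spec hj2).choose⟩ : Fin (m+1))
            = ⟨Nat.find hj, (Nat.find_spec hj).choose⟩ := Fin.ext hfind
        rw [hfin]
        exact hBeq _
      have hvG : vG = c⁻¹ • ContinuousLinearMap.adjoint R vF := by
        show AG.inverse gG = c⁻¹ • ContinuousLinearMap.adjoint R (AF.inverse gF)
        rw [hAG, inverse_conj hR AF hc2.ne', hg2val]
        show (c^2)⁻¹ • (ContinuousLinearMap.adjoint R
          (AF.inverse (R (c • ContinuousLinearMap.adjoint R gF)))) = _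
        rw [map_smul, hrr, map_smul, map_smul, smul_smul]
        congr 1
        rw [sq]
        field_simp
      have hdivpos : ∀ b : ℝ, 0 < b ↔ 0 < b / c^2 := by
        intro b
        constructor
        · intro h; exact div_pos h hc2
        · intro h
          rcases div_pos_iff.mp h with ⟨h1, _⟩ | ⟨_, h2⟩
          · exact h1
          · linarith
      have hdivneg : ∀ b : ℝ, b < 0 ↔ b / c^2 < 0 := by
        intro b
        constructor
        · intro h; exact div_neg_of_neg_of_pos h hc2
        · intro h
          rcases div_neg_iff.mp h with ⟨h1, h2⟩ | ⟨h1, _⟩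
          · linarith
          · exact h1
      have hposG : posSpace AG = (posSpace AF).map
          ((ContinuousLinearMap.adjoint R : _ →L[ℝ] _) :
            EuclideanSpace ℝ (Fin m) →ₗ[ℝ] EuclideanSpace ℝ (Fin m)) := by
        rw [hAG]
        exact sup_eig_conj hR AF hc2 _ hdivpos
      have hnegG : negSpace AG = (negSpace AF).map
          ((ContinuousLinearMap.adjoint R : _ →L[ℝ] _) :
            EuclideanSpace ℝ (Fin m) →ₗ[ℝ] EuclideanSpace ℝ (Fin m)) := by
        rw [hAG]
        exact sup_eig_conj hR AF hc2 _ hdivneg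
      have hwGval : wG = c⁻¹ • ContinuousLinearMap.adjoint R wF := by
        show (↑(Submodule.orthogonalProjection (posSpace AG) vG)
            - ↑(Submodule.orthogonalProjection (negSpace AG) vG) : EuclideanSpace ℝ (Fin m)) = _
        rw [hposG, hnegG, hvG]
        rw [show c⁻¹ • ContinuousLinearMap.adjoint R vF
          = ContinuousLinearMap.adjoint R (c⁻¹ • vF) from (map_smul _ _ _).symm]
        rw [proj_map hR, proj_map hR]
        show ContinuousLinearMap.adjoint R ↑((Submodule.orthogonalProjection (posSpace AF)) (c⁻¹ • vF))
            - ContinuousLinearMap.adjoint R ↑((Submodule.orthogonalProjection (negSpace AF)) (c⁻¹ • vF))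
          = c⁻¹ • ContinuousLinearMap.adjoint R
            (↑((Submodule.orthogonalProjection (posSpace AF)) vF) - ↑((Submodule.orthogonalProjection (negSpace AF)) vF))
        simp [map_smul, map_sub, smul_sub]
      have hnwG : ‖wG‖ = c⁻¹ * ‖wF‖ := by
        rw [hwGval, norm_smul, hnormRt hR, Real.norm_eq_abs, abs_of_pos (inv_pos.mpr hc)]
      have hmt : c * θ * (c⁻¹ * ‖wF‖) = θ * ‖wF‖ := by
        field_simp
      have hwhG : whG = c⁻¹ • ContinuousLinearMap.adjoint R whF := by
        show (1 ⊔ θ' * ‖wG‖)⁻¹ • wG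
          = c⁻¹ • ContinuousLinearMap.adjoint R ((1 ⊔ θ * ‖wF‖)⁻¹ • wF)
        rw [hnwG, hθ', hwGval, hmt, map_smul]
        exact smul_comm _ _ _
      have hFz : F (c • R (c⁻¹ • ContinuousLinearMap.adjoint R z)) = F z := congrArg F (hLT z)
      have hFval : ∀ s : ℝ,
          F (c • R (c⁻¹ • ContinuousLinearMap.adjoint R z - s • whG)) = F (z - s • whF) := by
        intro s
        rw [hwhG]
        have harg : c⁻¹ • ContinuousLinearMap.adjoint R z
            - s • (c⁻¹ • ContinuousLinearMap.adjoint R whF)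
            = c⁻¹ • ContinuousLinearMap.adjoint R (z - s • whF) := by
          simp only [map_sub, map_smul, smul_sub, smul_smul]
          module
        rw [harg, hLT]
      have hinner : ⟪whG, gG⟫ = ⟪whF, gF⟫ := by
        rw [hwhG, hg2val, real_inner_smul_left, real_inner_smul_right, hinnerRt hR,
          ← mul_assoc, inv_mul_cancel₀ hc.ne', one_mul]
      have hbcond : ∀ h : ℕ,
          ((fun w => F (c • R w)) (c⁻¹ • ContinuousLinearMap.adjoint R z - (γ₀ / 3 ^ h) • whG)
              - (fun w => F (c • R w)) (c⁻¹ • ContinuousLinearMap.adjoint R z)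
            ≤ -(γ₀ / 3 ^ h * ⟪whG, gG⟫) / 3)
          ↔ (F (z - (γ₀ / 3 ^ h) • whF) - F z ≤ -(γ₀ / 3 ^ h * ⟪whF, gF⟫) / 3) := by
        intro h
        rw [show ((fun w => F (c • R w))
            (c⁻¹ • ContinuousLinearMap.adjoint R z - (γ₀ / 3 ^ h) • whG) : ℝ)
          = F (z - (γ₀ / 3 ^ h) • whF) from hFval _]
        rw [show ((fun w => F (c • R w)) (c⁻¹ • ContinuousLinearMap.adjoint R z) : ℝ)
          = F z from hFz]
        rw [hinner]
      by_cases hb : ∃ h : ℕ, F (z - (γ₀ / 3 ^ h) • whF) - F z ≤ -(γ₀ / 3 ^ h * ⟪whF, gF⟫) / 3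
      · have hb2 : ∃ h : ℕ,
            (fun w => F (c • R w)) (c⁻¹ • ContinuousLinearMap.adjoint R z - (γ₀ / 3 ^ h) • whG)
              - (fun w => F (c • R w)) (c⁻¹ • ContinuousLinearMap.adjoint R z)
            ≤ -(γ₀ / 3 ^ h * ⟪whG, gG⟫) / 3 := by
          obtain ⟨h, hh⟩ := hb
          exact ⟨h, (hbcond h).mpr hh⟩
        rw [dif_pos hb2, dif_pos hb]
        have hfindb : Nat.find hb2 = Nat.find hb :=
          le_antisymm (Nat.find_le ((hbcond _).mpr (Nat.find_spec hb)))
            (Nat.find_le ((hbcond _).mp (Nat.find_spec hb2)))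
        rw [hfindb, hwhG]
        simp only [map_sub, map_smul, smul_sub, smul_smul]
        module
      · have hb2 : ¬ ∃ h : ℕ,
            (fun w => F (c • R w)) (c⁻¹ • ContinuousLinearMap.adjoint R z - (γ₀ / 3 ^ h) • whG)
              - (fun w => F (c • R w)) (c⁻¹ • ContinuousLinearMap.adjoint R z)
            ≤ -(γ₀ / 3 ^ h * ⟪whG, gG⟫) / 3 := by
          rintro ⟨h, hh⟩
          exact hb ⟨h, (hbcond h).mp hh⟩
        rw [dif_neg hb2, dif_neg hb]
    · have hj2 : ¬ ∃ j : ℕ, ∃ hjm : j < m + 1, κG * ‖gG‖ ^ τ ≤ minsp (BG ⟨j, hjm⟩) := by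
        rintro ⟨j, hjm, h⟩
        exact hj ⟨j, hjm, (hcond j hjm).mp h⟩
      rw [dif_neg hj2, dif_neg hj]




end BnqnAux

/-- **Theorem 2 (invariance of BNQN under conjugation by `A = cR`, `R` unitary, `c > 0`).**
If `G = F ∘ A` with `A = c R`, `R Rᵀ = Id`, `c > 0`, `δᵢ' = δᵢ c^{2-τ}`, `θ' = cθ`, and
`z₀' = A⁻¹ z₀ = c⁻¹ Rᵀ z₀`, then the BNQN sequences satisfy `zₙ' = A⁻¹ zₙ` for all `n`. -/
theorem bnqn_invariant_under_unitary_conjugation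
    {m : ℕ} (F : EuclideanSpace ℝ (Fin m) → ℝ) (hF : ContDiff ℝ 2 F)
    (c : ℝ) (hc : 0 < c)
    (R : EuclideanSpace ℝ (Fin m) →L[ℝ] EuclideanSpace ℝ (Fin m))
    (hR : R.comp (ContinuousLinearMap.adjoint R) =
      ContinuousLinearMap.id ℝ (EuclideanSpace ℝ (Fin m)))
    (A : EuclideanSpace ℝ (Fin m) → EuclideanSpace ℝ (Fin m)) (hA : ∀ z, A z = c • R z)
    (G : EuclideanSpace ℝ (Fin m) → ℝ) (hG : ∀ z, G z = F (A z))
    (δ δ' : Fin (m + 1) → ℝ) (θ θ' τ γ₀ : ℝ)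
    (hδ : Function.Injective δ) (hθ : 0 ≤ θ) (hτ : 0 < τ) (hγ₀ : 0 < γ₀) (hγ₀' : γ₀ ≤ 1)
    (hδ' : ∀ i, δ' i = δ i * c ^ ((2 : ℝ) - τ)) (hθ' : θ' = c * θ)
    (z₀ z₀' : EuclideanSpace ℝ (Fin m))
    (hz₀' : z₀' = c⁻¹ • (ContinuousLinearMap.adjoint R) z₀) :
    ∀ n : ℕ, bnqnSeq G δ' θ' τ γ₀ z₀' n =
      c⁻¹ • (ContinuousLinearMap.adjoint R) (bnqnSeq F δ θ τ γ₀ z₀ n) := by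
  have hGf : G = fun w => F (c • R w) := funext fun w => by rw [hG, hA]
  subst hGf
  intro n
  induction n with
  | zero => exact hz₀'
  | succ n ih =>
      simp only [bnqnSeq]
      rw [ih]
      exact BnqnAux.bnqnStep_conj F hF hc hR δ δ' θ θ' τ γ₀ hτ hδ' hθ' _
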